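/- Let (X, μ) be a probability space with a measure-preserving R × Z action R, and suppose A ⊆ X is a measurable set Borel-isomorphic to Y × [−T, T] × {−N, …, N} (carrying measure ν ⊗ Lebesgue ⊗ counting) such that R_{(t,n)}(y, s, m) = (y, s + t, m + n) whenever |s|, |s+t| ≤ T and |m|, |m+n| ≤ N, and μ(X \ A) ≤ ε. Fix p ∈ R and define u : X → C by u(y, s, m) = e^{ips} on A and u = 1 off A. Then for every t with |t| ≤ n₀ (where n₀ ≤ T), ∫ |u ∘ R_{(t,0)}^{-1} − e^{−ipt} u|² dμ ≤ 4(ε + n₀/T). -/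

import Mathlib

open scoped Classical

open MeasureTheory

/-- The key Rohlin-tower estimate in the flow direction: if `A` is a Rohlin tower
for the `ℝ`-direction of an `ℝ × ℤ` action (encoded by the flow `σ_t = R_{(t,0)}`,
the `[−T,T]`-coordinate `s`, the equivariance on `A`, and the uniform distribution
of `s` over `[−T,T]`), `μ(Aᶜ) ≤ ε`, and `u = e^{ips}` on `A`, `u = 1` off `A`, then
for `|t| ≤ n₀ ≤ T` one has `∫ |u ∘ R_{(t,0)}⁻¹ − e^{−ipt}u|² dμ ≤ 4(ε + n₀/T)`. -/
theorem stmt9 {X : Type*} [MeasurableSpace X] (μ : Measure X) [IsProbabilityMeasure μ]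
    (σ : ℝ → X → X) (hσ : ∀ t, MeasurePreserving (σ t) μ μ)
    (hσ0 : ∀ x, σ 0 x = x) (hσadd : ∀ s t x, σ (s + t) x = σ s (σ t x))
    (A : Set X) (hA : MeasurableSet A)
    (T ε n₀ : ℝ) (hT : 0 < T) (hε : 0 ≤ ε) (hn₀ : 0 ≤ n₀) (hn₀T : n₀ ≤ T)
    (hAc : μ Aᶜ ≤ ENNReal.ofReal ε)
    (s : X → ℝ) (hs : Measurable s)
    (hsA : ∀ x ∈ A, |s x| ≤ T)
    (hequi : ∀ (t : ℝ), ∀ x ∈ A, |s x + t| ≤ T → σ t x ∈ A ∧ s (σ t x) = s x + t)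
    (hstrip : ∀ a b : ℝ, a ≤ b →
      μ {x ∈ A | s x ∈ Set.Icc a b} ≤ ENNReal.ofReal ((b - a) / (2 * T)))
    (p : ℝ) (u : X → ℂ)
    (hu : ∀ x, u x = if x ∈ A then Complex.exp (Complex.I * p * s x) else 1) :
    ∀ t : ℝ, |t| ≤ n₀ →
      ∫⁻ x, ENNReal.ofReal
          (‖u (σ (-t) x) - Complex.exp (-(Complex.I * p * t)) * u x‖ ^ 2) ∂μ
        ≤ ENNReal.ofReal (4 * (ε + n₀ / T)) := by
  intro t ht
  have habs : ∀ x, ‖u x‖ = 1 := by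
    intro x
    rw [hu x]
    split
    · rw [Complex.norm_exp]
      simp [Complex.mul_re]
    · simp
  set G : Set X := A ∩ {x | |s x| ≤ T - n₀} with hG
  have hGm : MeasurableSet G :=
    hA.inter (measurableSet_le hs.abs measurable_const)
  have hzero : ∀ x ∈ G, u (σ (-t) x) = Complex.exp (-(Complex.I * p * t)) * u x := by
    intro x hx
    have hxA : x ∈ A := hx.1
    have hxs : |s x| ≤ T - n₀ := hx.2
    have h1 : |s x + -t| ≤ T := by
      calc |s x + -t| ≤ |s x| + |(-t)| := abs_add_le _ _
        _ ≤ (T - n₀) + n₀ := by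
            have : |(-t)| = |t| := abs_neg t
            linarith [this ▸ ht]
        _ = T := by ring
    obtain ⟨hmem, hseq⟩ := hequi (-t) x hxA h1
    rw [hu (σ (-t) x), if_pos hmem, hseq, hu x, if_pos hxA, ← Complex.exp_add]
    congr 1
    push_cast
    ring
  have hbound : ∀ x, ENNReal.ofReal
      (‖u (σ (-t) x) - Complex.exp (-(Complex.I * p * t)) * u x‖ ^ 2)
      ≤ Gᶜ.indicator (fun _ => (4 : ENNReal)) x := by
    intro x
    by_cases hx : x ∈ G
    · rw [hzero x hx]
      simp [Set.indicator_of_notMem (by simpa using hx : x ∉ Gᶜ)]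
    · rw [Set.indicator_of_mem (by simpa using hx : x ∈ Gᶜ)]
      have h2 : ‖u (σ (-t) x) - Complex.exp (-(Complex.I * p * t)) * u x‖ ≤ 2 := by
        calc ‖u (σ (-t) x) - Complex.exp (-(Complex.I * p * t)) * u x‖
            ≤ ‖u (σ (-t) x)‖ +
              ‖Complex.exp (-(Complex.I * p * t)) * u x‖ := by
                exact norm_sub_le _ _
          _ ≤ 2 := by
              rw [habs, norm_mul, habs, Complex.norm_exp]
              have : (-(Complex.I * p * t)).re = 0 := by simp [Complex.mul_re]
              rw [this]
              norm_num
      have h4 : ‖u (σ (-t) x) - Complex.exp (-(Complex.I * p * t)) * u x‖ ^ 2 ≤ 4 := by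
        nlinarith [norm_nonneg
          (u (σ (-t) x) - Complex.exp (-(Complex.I * p * t)) * u x)]
      calc ENNReal.ofReal _ ≤ ENNReal.ofReal 4 := ENNReal.ofReal_le_ofReal h4
        _ = 4 := by norm_num
  have hint : (∫⁻ x, ENNReal.ofReal
      (‖u (σ (-t) x) - Complex.exp (-(Complex.I * p * t)) * u x‖ ^ 2) ∂μ)
      ≤ 4 * μ Gᶜ := by
    calc _ ≤ ∫⁻ x, Gᶜ.indicator (fun _ => (4 : ENNReal)) x ∂μ := lintegral_mono hbound
      _ = 4 * μ Gᶜ := lintegral_indicator_const hGm.compl 4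
  -- bound μ Gᶜ
  have hsub : Gᶜ ⊆ Aᶜ ∪ ({x ∈ A | s x ∈ Set.Icc (T - n₀) T}
      ∪ {x ∈ A | s x ∈ Set.Icc (-T) (-(T - n₀))}) := by
    intro x hx
    by_cases hxA : x ∈ A
    · right
      have hns : ¬ |s x| ≤ T - n₀ := fun h => hx ⟨hxA, h⟩
      have habs' := hsA x hxA
      have h' := abs_le.mp habs'
      rcases lt_abs.mp (not_le.mp hns) with h | h
      · left; exact ⟨hxA, le_of_lt h, h'.2⟩
      · right; exact ⟨hxA, h'.1, by linarith⟩
    · left; exact hxA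
  have hstrip1 : μ {x ∈ A | s x ∈ Set.Icc (T - n₀) T} ≤ ENNReal.ofReal (n₀ / (2 * T)) := by
    have := hstrip (T - n₀) T (by linarith)
    simpa using this
  have hstrip2 : μ {x ∈ A | s x ∈ Set.Icc (-T) (-(T - n₀))}
      ≤ ENNReal.ofReal (n₀ / (2 * T)) := by
    have := hstrip (-T) (-(T - n₀)) (by linarith)
    have heq : -(T - n₀) - -T = n₀ := by ring
    rw [heq] at this
    exact this
  have hGc : μ Gᶜ ≤ ENNReal.ofReal ε + (ENNReal.ofReal (n₀ / (2 * T))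
      + ENNReal.ofReal (n₀ / (2 * T))) := by
    calc μ Gᶜ ≤ μ (Aᶜ ∪ ({x ∈ A | s x ∈ Set.Icc (T - n₀) T}
        ∪ {x ∈ A | s x ∈ Set.Icc (-T) (-(T - n₀))})) := measure_mono hsub
      _ ≤ μ Aᶜ + μ ({x ∈ A | s x ∈ Set.Icc (T - n₀) T}
          ∪ {x ∈ A | s x ∈ Set.Icc (-T) (-(T - n₀))}) := measure_union_le _ _
      _ ≤ μ Aᶜ + (μ {x ∈ A | s x ∈ Set.Icc (T - n₀) T}
          + μ {x ∈ A | s x ∈ Set.Icc (-T) (-(T - n₀))}) := by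
            gcongr
            exact measure_union_le _ _
      _ ≤ _ := by gcongr
  have hfinal : (4 : ENNReal) * μ Gᶜ ≤ ENNReal.ofReal (4 * (ε + n₀ / T)) := by
    calc (4 : ENNReal) * μ Gᶜ ≤ 4 * (ENNReal.ofReal ε + (ENNReal.ofReal (n₀ / (2 * T))
        + ENNReal.ofReal (n₀ / (2 * T)))) := by gcongr
      _ = ENNReal.ofReal 4 * ENNReal.ofReal (ε + (n₀ / (2 * T) + n₀ / (2 * T))) := by
          rw [← ENNReal.ofReal_add (by positivity) (by positivity),
            ← ENNReal.ofReal_add hε (by positivity)]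
          norm_num
      _ = ENNReal.ofReal (4 * (ε + (n₀ / (2 * T) + n₀ / (2 * T)))) := by
          rw [← ENNReal.ofReal_mul (by norm_num)]
      _ = ENNReal.ofReal (4 * (ε + n₀ / T)) := by
          congr 1
          field_simp
          ring
  exact hint.trans hfinal
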